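/- Let ℓ be a prime and n a natural number. The quotient ring ℤ_ℓ[T]/(T^{ℓ^n} − 1) is a local ring whose maximal ideal is generated by ℓ and T − 1. -/

import Mathlib

open Polynomial

lemma padic_key_dvd (ℓ : ℕ) [Fact ℓ.Prime] (n : ℕ) :
    ((X : (ℤ_[ℓ])[X]) - 1) ^ ℓ ^ n - ((X : (ℤ_[ℓ])[X]) ^ ℓ ^ n - 1) ∈
      Ideal.span {(C (ℓ : ℤ_[ℓ]) : (ℤ_[ℓ])[X])} := by
  have hspan : (Ideal.span {(C (ℓ : ℤ_[ℓ]) : (ℤ_[ℓ])[X])} : Ideal (ℤ_[ℓ])[X]) =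
      Ideal.map (C : ℤ_[ℓ] →+* (ℤ_[ℓ])[X]) (RingHom.ker (PadicInt.toZMod : ℤ_[ℓ] →+* ZMod ℓ)) := by
    rw [PadicInt.ker_toZMod, PadicInt.maximalIdeal_eq_span_p, Ideal.map_span,
      Set.image_singleton]
  rw [hspan, Ideal.mem_map_C_iff]
  intro i
  rw [RingHom.mem_ker]
  have hmap : Polynomial.map (PadicInt.toZMod : ℤ_[ℓ] →+* ZMod ℓ)
      (((X : (ℤ_[ℓ])[X]) - 1) ^ ℓ ^ n - ((X : (ℤ_[ℓ])[X]) ^ ℓ ^ n - 1)) = 0 := by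
    have : CharP ((ZMod ℓ)[X]) ℓ :=
      charP_of_injective_ringHom (f := (C : ZMod ℓ →+* (ZMod ℓ)[X])) C_injective ℓ
    simp only [Polynomial.map_sub, Polynomial.map_pow, Polynomial.map_one, Polynomial.map_X]
    rw [sub_pow_char_pow, one_pow, sub_self]
  rw [← Polynomial.coeff_map, hmap, Polynomial.coeff_zero]

open Polynomial in
theorem local_ring_group_ring (ℓ : ℕ) [Fact ℓ.Prime] (n : ℕ) :
    ∃ h : IsLocalRing ((ℤ_[ℓ])[X] ⧸ Ideal.span {(X : (ℤ_[ℓ])[X]) ^ ℓ ^ n - 1}),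
      @IsLocalRing.maximalIdeal _ _ h =
        Ideal.span {Ideal.Quotient.mk (Ideal.span {(X : (ℤ_[ℓ])[X]) ^ ℓ ^ n - 1}) (C (ℓ : ℤ_[ℓ])),
          Ideal.Quotient.mk (Ideal.span {(X : (ℤ_[ℓ])[X]) ^ ℓ ^ n - 1}) ((X : (ℤ_[ℓ])[X]) - 1)} := by
  set q : ℕ := ℓ ^ n with hq
  have hq0 : q ≠ 0 := pow_ne_zero n (Fact.out (p := ℓ.Prime)).ne_zero
  set f : (ℤ_[ℓ])[X] := (X : (ℤ_[ℓ])[X]) ^ q - 1 with hf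
  set J : Ideal (ℤ_[ℓ])[X] := Ideal.span {f} with hJ
  set mkJ := Ideal.Quotient.mk J with hmkJ
  -- the candidate maximal ideal
  set m : Ideal ((ℤ_[ℓ])[X] ⧸ J) := Ideal.span {mkJ (C (ℓ : ℤ_[ℓ])), mkJ ((X : (ℤ_[ℓ])[X]) - 1)}
    with hm
  -- ideal upstairs
  set I : Ideal (ℤ_[ℓ])[X] := Ideal.span {C (ℓ : ℤ_[ℓ]), (X : (ℤ_[ℓ])[X]) - 1} with hI
  have hJI : J ≤ I := by
    rw [hJ, Ideal.span_le, Set.singleton_subset_iff]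
    have hdvd : ((X : (ℤ_[ℓ])[X]) - 1) ∣ f := by
      rw [show ((X : (ℤ_[ℓ])[X]) - 1) = X - C 1 by rw [map_one]]
      rw [Polynomial.dvd_iff_isRoot]
      simp [hf, Polynomial.IsRoot]
    obtain ⟨g, hg⟩ := hdvd
    rw [hg]
    exact Ideal.mul_mem_right _ _ (Ideal.subset_span (by simp))
  -- I is maximal
  have hImax : I.IsMaximal := by
    have h1 : I = Ideal.span {C (ℓ : ℤ_[ℓ]), (X : (ℤ_[ℓ])[X]) - C 1} := by
      rw [hI, map_one]
    rw [h1]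
    have hfield : IsField (ℤ_[ℓ] ⧸ (Ideal.span {(ℓ : ℤ_[ℓ])} : Ideal ℤ_[ℓ])) := by
      have : (Ideal.span {(ℓ : ℤ_[ℓ])} : Ideal ℤ_[ℓ]).IsMaximal := by
        rw [← PadicInt.maximalIdeal_eq_span_p]
        exact IsLocalRing.maximalIdeal.isMaximal _
      exact (Ideal.Quotient.maximal_ideal_iff_isField_quotient _).mp this
    have e := (Polynomial.quotientSpanCXSubCAlgEquiv (ℓ : ℤ_[ℓ]) (1 : ℤ_[ℓ])).toRingEquiv
    have hfield2 : IsField ((ℤ_[ℓ])[X] ⧸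
        (Ideal.span {C (ℓ : ℤ_[ℓ]), (X : (ℤ_[ℓ])[X]) - C 1} : Ideal (ℤ_[ℓ])[X])) :=
      e.toMulEquiv.isField hfield
    exact Ideal.Quotient.maximal_of_isField _ hfield2
  -- m is the image of I, hence maximal
  have hmImage : m = Ideal.map mkJ I := by
    rw [hm, hI, Ideal.map_span, Set.image_insert_eq, Set.image_singleton]
  have hmMax : m.IsMaximal := by
    rw [hmImage]
    rcases Ideal.map_eq_top_or_isMaximal_of_surjective mkJ Ideal.Quotient.mk_surjective hImax with
      htop | hmax
    · exfalso
      have := congrArg (Ideal.comap mkJ) htop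
      rw [Ideal.comap_map_of_surjective mkJ Ideal.Quotient.mk_surjective, Ideal.comap_top, ← RingHom.ker_eq_comap_bot] at this
      have hker : RingHom.ker mkJ = J := Ideal.mk_ker
      rw [hker] at this
      have : I = ⊤ := by
        rw [← this]
        exact (sup_eq_left.mpr hJI).symm
      exact hImax.ne_top this
    · exact hmax
  -- integrality of the quotient over ℤ_[ℓ]
  have hmonic : f.Monic := by
    rw [hf, show ((1 : (ℤ_[ℓ])[X]) = C 1) by rw [map_one]]
    exact Polynomial.monic_X_pow_sub_C 1 hq0
  have : Algebra.IsIntegral ℤ_[ℓ] ((ℤ_[ℓ])[X] ⧸ J) := by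
    have : Module.Finite ℤ_[ℓ] (AdjoinRoot f) := (AdjoinRoot.powerBasis' hmonic).finite
    exact Algebra.IsIntegral.of_finite ℤ_[ℓ] (AdjoinRoot f)
  -- every maximal ideal contains m
  have hle : ∀ M : Ideal ((ℤ_[ℓ])[X] ⧸ J), M.IsMaximal → m ≤ M := by
    intro M hM
    have hcomap : (M.comap (algebraMap ℤ_[ℓ] ((ℤ_[ℓ])[X] ⧸ J))).IsMaximal :=
      Ideal.isMaximal_comap_of_isIntegral_of_isMaximal M
    have hcomap_eq : M.comap (algebraMap ℤ_[ℓ] ((ℤ_[ℓ])[X] ⧸ J)) = IsLocalRing.maximalIdeal ℤ_[ℓ] :=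
      IsLocalRing.eq_maximalIdeal hcomap
    have hlmem : mkJ (C (ℓ : ℤ_[ℓ])) ∈ M := by
      have : (ℓ : ℤ_[ℓ]) ∈ M.comap (algebraMap ℤ_[ℓ] ((ℤ_[ℓ])[X] ⧸ J)) := by
        rw [hcomap_eq, PadicInt.maximalIdeal_eq_span_p]
        exact Ideal.subset_span rfl
      simpa using this
    have hXmem : mkJ ((X : (ℤ_[ℓ])[X]) - 1) ∈ M := by
      have hpow : (mkJ ((X : (ℤ_[ℓ])[X]) - 1)) ^ q ∈ M := by
        have key := padic_key_dvd ℓ n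
        rw [Ideal.mem_span_singleton] at key
        obtain ⟨g, hg⟩ := key
        have : ((X : (ℤ_[ℓ])[X]) - 1) ^ q = f + C (ℓ : ℤ_[ℓ]) * g := by
          rw [hf, hq]; linear_combination hg
        rw [← map_pow, this, map_add, map_mul]
        have hfz : mkJ f = 0 := by
          rw [hmkJ, Ideal.Quotient.eq_zero_iff_mem, hJ]
          exact Ideal.subset_span rfl
        rw [hfz, zero_add]
        exact Ideal.mul_mem_right _ _ hlmem
      exact (hM.isPrime.pow_mem_iff_mem q (Nat.pos_of_ne_zero hq0)).mp hpow
    rw [hm, Ideal.span_le]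
    intro x hx
    rcases hx with h | h
    · rw [h]; exact hlmem
    · rw [Set.mem_singleton_iff.mp h]; exact hXmem
  -- conclude
  have hloc : IsLocalRing ((ℤ_[ℓ])[X] ⧸ J) :=
    IsLocalRing.of_unique_max_ideal ⟨m, hmMax, fun M hM => (hmMax.eq_of_le hM.ne_top (hle M hM)).symm⟩
  exact ⟨hloc, (IsLocalRing.eq_maximalIdeal hmMax).symm⟩
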